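/- arXiv:2604.18782 — 5 statements merged into one kernel-verified Lean document; each statement's English description precedes it below -/
import Mathlib

section
/- Let X be a type with decidable equality, let γ_1, …, γ_n be permutations of X, let p, x ∈ X, and let i < j be indices in {1,…,n} such that γ_k p = p for every k with i < k < j. Set α := γ_{j-1} * ⋯ * γ_{i+1} (with α = 1 if j = i+1), and define γ'_i := (Equiv.swap (α⁻¹ x) p) * γ_i, γ'_j := γ_j * (Equiv.swap x p), and γ'_k := γ_k for all k ∉ {i, j}. Then γ'_n * γ'_{n-1} * ⋯ * γ'_1 = γ_n * γ_{n-1} * ⋯ * γ_1. -/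
lemma prod_fix_aux {X : Type*} (p : X) :
    ∀ l : List (Equiv.Perm X), (∀ σ ∈ l, σ p = p) → l.prod p = p := by
  intro l hl
  induction l with
  | nil => rfl
  | cons σ t ih =>
    simp only [List.prod_cons, Equiv.Perm.mul_apply,
      ih (fun τ hτ => hl τ (List.mem_cons_of_mem _ hτ)), hl σ (List.mem_cons_self)]

/-- **Augmentation lemma, part (i).** Let `γ 1, …, γ n` be permutations of `X`, let
`p, x ∈ X`, and let `1 ≤ i < j ≤ n` be indices such that `γ k p = p` for all `i < k < j`.
Set `α := γ (j-1) * ⋯ * γ (i+1)` (so `α = 1` if `j = i + 1`), and define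
`γ' i := swap (α⁻¹ x) p * γ i`, `γ' j := γ j * swap x p` and `γ' k := γ k` otherwise.
Then `γ' n * ⋯ * γ' 1 = γ n * ⋯ * γ 1`. -/
theorem augmentation_total_product {X : Type*} [DecidableEq X]
    (n : ℕ) (γ : ℕ → Equiv.Perm X) (p x : X) (i j : ℕ)
    (h1i : 1 ≤ i) (hij : i < j) (hjn : j ≤ n)
    (hfix : ∀ k, i < k → k < j → γ k p = p) :
    let α : Equiv.Perm X := (((List.range' (i + 1) (j - 1 - i)).reverse).map γ).prod
    let γ' : ℕ → Equiv.Perm X := fun k =>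
      if k = i then Equiv.swap (α⁻¹ x) p * γ i
      else if k = j then γ j * Equiv.swap x p
      else γ k
    (((List.range' 1 n).reverse).map γ').prod = (((List.range' 1 n).reverse).map γ).prod := by
  intro α γ'
  obtain ⟨a, m, b, rfl, rfl, rfl⟩ : ∃ a m b, i = a + 1 ∧ j = a + m + 2 ∧ n = a + m + b + 2 :=
    ⟨i - 1, j - i - 1, n - j, by omega, by omega, by omega⟩
  have key : ∀ s u v : ℕ, List.range' s u ++ List.range' (s + u) v = List.range' s (u + v) := by
    intro s u v
    simpa using List.range'_append (s := s) (m := u) (n := v) (step := 1)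
  have hdec : List.range' 1 (a + m + b + 2) =
      List.range' 1 a ++ (List.range' (1 + a) 1 ++ (List.range' (1 + a + 1) m ++
        (List.range' (1 + a + 1 + m) 1 ++ List.range' (1 + a + 1 + m + 1) b))) := by
    rw [key, key, key, key]
    congr 1
    omega
  have hα : α = (((List.range' (1 + a + 1) m).reverse).map γ).prod := by
    simp only [α, show a + 1 + 1 = 1 + a + 1 from by omega,
      show a + m + 2 - 1 - (a + 1) = m from by omega]
  have hαp : α p = p := by
    rw [hα]
    apply prod_fix_aux
    intro σ hσ
    simp only [List.mem_map, List.mem_reverse, List.mem_range'_1] at hσ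
    obtain ⟨k, hk, rfl⟩ := hσ
    exact hfix k (by omega) (by omega)
  have hαinvp : α⁻¹ p = p := by
    rw [← hαp, Equiv.Perm.inv_def, Equiv.symm_apply_apply, hαp]
  have hkey : Equiv.swap x p * (α * (Equiv.swap (α⁻¹ x) p * γ (a + 1))) = α * γ (a + 1) := by
    rw [← mul_assoc, Equiv.swap_mul_eq_mul_swap, hαinvp, mul_assoc,
      ← mul_assoc (Equiv.swap _ p), Equiv.swap_mul_self, one_mul]
  have hm1 : ∀ k ∈ (List.range' 1 a).reverse, γ' k = γ k := by
    intro k hk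
    simp only [List.mem_reverse, List.mem_range'_1] at hk
    simp only [γ', if_neg (by omega : ¬ k = a + 1), if_neg (by omega : ¬ k = a + m + 2)]
  have hm2 : ∀ k ∈ (List.range' (1 + a + 1) m).reverse, γ' k = γ k := by
    intro k hk
    simp only [List.mem_reverse, List.mem_range'_1] at hk
    simp only [γ', if_neg (by omega : ¬ k = a + 1), if_neg (by omega : ¬ k = a + m + 2)]
  have hm3 : ∀ k ∈ (List.range' (1 + a + 1 + m + 1) b).reverse, γ' k = γ k := by
    intro k hk
    simp only [List.mem_reverse, List.mem_range'_1] at hk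
    simp only [γ', if_neg (by omega : ¬ k = a + 1), if_neg (by omega : ¬ k = a + m + 2)]
  have hγ'i : γ' (1 + a) = Equiv.swap (α⁻¹ x) p * γ (a + 1) := by
    simp only [γ', if_pos (by omega : 1 + a = a + 1)]
  have hγ'j : γ' (1 + a + 1 + m) = γ (a + m + 2) * Equiv.swap x p := by
    simp only [γ', if_neg (by omega : ¬ 1 + a + 1 + m = a + 1),
      if_pos (by omega : 1 + a + 1 + m = a + m + 2)]
  rw [hdec]
  simp only [List.reverse_append, List.map_append, List.prod_append, List.range'_one,
    List.reverse_cons, List.reverse_nil, List.nil_append, List.map_cons, List.map_nil,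
    List.prod_cons, List.prod_nil, mul_one,
    List.map_congr_left hm1, List.map_congr_left hm2, List.map_congr_left hm3,
    hγ'i, hγ'j, ← hα]
  simp only [mul_assoc, hkey]
  rw [show 1 + a + 1 + m = a + m + 2 from by omega, show 1 + a = a + 1 from by omega]
end

section
/- Let X be a finite type with decidable equality, let p ∈ X, and let γ_1, …, γ_n be permutations of X each fixing p (γ_k p = p for all k), such that for all a, b ∈ X with a ≠ p and b ≠ p there exists an element τ of the subgroup generated by {γ_1, …, γ_n} with τ a = b. Let i ≠ j be indices and let x, y ∈ X with x ≠ p and y ≠ p. Define γ'_i := (Equiv.swap y p) * γ_i, γ'_j := γ_j * (Equiv.swap x p), and γ'_k := γ_k for k ∉ {i, j}. Then the subgroup of Equiv.Perm X generated by {γ'_1, …, γ'_n} acts transitively on X: for all a, b ∈ X there exists τ in this subgroup with τ a = b. -/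
/-- **Augmentation lemma, part (ii).** Let `X` be a finite type, `p ∈ X`, and
`γ 0, …, γ (n-1)` permutations of `X` each fixing `p` and generating a subgroup acting
transitively on the complement of `p`. Let `i ≠ j` be indices and `x, y ∈ X` with
`x ≠ p`, `y ≠ p`. Define `γ' i := swap y p * γ i`, `γ' j := γ j * swap x p` and
`γ' k := γ k` otherwise. Then the subgroup generated by the `γ' k` acts transitively
on all of `X`. -/
theorem augmentation_preserves_transitivity {X : Type*} [Fintype X] [DecidableEq X]
    (p : X) (n : ℕ) (γ : Fin n → Equiv.Perm X) (hfix : ∀ k, γ k p = p)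
    (htrans : ∀ a b : X, a ≠ p → b ≠ p →
      ∃ τ ∈ Subgroup.closure (Set.range γ), τ a = b)
    (i j : Fin n) (hij : i ≠ j) (x y : X) (hx : x ≠ p) (hy : y ≠ p) :
    ∀ a b : X, ∃ τ ∈ Subgroup.closure (Set.range (fun k : Fin n =>
        if k = i then Equiv.swap y p * γ i
        else if k = j then γ j * Equiv.swap x p
        else γ k)), τ a = b := by
  set γ' : Fin n → Equiv.Perm X := fun k : Fin n =>
    if k = i then Equiv.swap y p * γ i
    else if k = j then γ j * Equiv.swap x p
    else γ k with hγ'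
  set G' := Subgroup.closure (Set.range γ') with hG'
  have hmem : ∀ k, γ' k ∈ G' := fun k => Subgroup.subset_closure ⟨k, rfl⟩
  -- the orbit of p under G'
  set O : Set X := {z | ∃ τ ∈ G', τ p = z} with hO
  have hpO : p ∈ O := ⟨1, one_mem _, rfl⟩
  have hG'O : ∀ σ ∈ G', ∀ z ∈ O, σ z ∈ O := by
    rintro σ hσ z ⟨τ, hτ, rfl⟩
    exact ⟨σ * τ, mul_mem hσ hτ, rfl⟩
  have hγ'i : γ' i = Equiv.swap y p * γ i := by simp [hγ']
  have hγ'j : γ' j = γ j * Equiv.swap x p := by simp [hγ', hij.symm]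
  have hyO : y ∈ O := by
    refine ⟨γ' i, hmem i, ?_⟩
    simp [hγ'i, hfix i, Equiv.swap_apply_right]
  have hγjinv : (γ j)⁻¹ p = p := by
    rw [Equiv.Perm.inv_eq_iff_eq]; exact (hfix j).symm
  have hxO : x ∈ O := by
    refine ⟨(γ' j)⁻¹, inv_mem (hmem j), ?_⟩
    simp [hγ'j, mul_inv_rev, hγjinv, (γ j).symm_apply_eq.mpr (hfix j).symm, Equiv.swap_apply_right]
  have hswapy : ∀ z ∈ O, Equiv.swap y p z ∈ O := by
    intro z hz
    rcases eq_or_ne z y with rfl | h1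
    · simpa [Equiv.swap_apply_left] using hpO
    rcases eq_or_ne z p with rfl | h2
    · simpa [Equiv.swap_apply_right] using hyO
    · simpa [Equiv.swap_apply_of_ne_of_ne h1 h2] using hz
  have hswapx : ∀ z ∈ O, Equiv.swap x p z ∈ O := by
    intro z hz
    rcases eq_or_ne z x with rfl | h1
    · simpa [Equiv.swap_apply_left] using hpO
    rcases eq_or_ne z p with rfl | h2
    · simpa [Equiv.swap_apply_right] using hxO
    · simpa [Equiv.swap_apply_of_ne_of_ne h1 h2] using hz
  -- every element of the old group preserves O
  have key : ∀ σ ∈ Subgroup.closure (Set.range γ), ∀ z ∈ O, σ z ∈ O := by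
    intro σ hσ
    refine (Subgroup.closure_induction
      (p := fun σ _ => (∀ z ∈ O, σ z ∈ O) ∧ (∀ z ∈ O, σ⁻¹ z ∈ O))
      ?_ ?_ ?_ ?_ hσ).1
    · rintro g ⟨k, rfl⟩
      rcases eq_or_ne k i with rfl | hki
      · constructor
        · intro z hz
          have h1 : γ k z = Equiv.swap y p (γ' k z) := by
            simp [hγ'i]
          rw [h1]
          exact hswapy _ (hG'O _ (hmem k) _ hz)
        · intro z hz
          have h1 : (γ k)⁻¹ z = (γ' k)⁻¹ (Equiv.swap y p z) := by
            simp [hγ'i, mul_inv_rev]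
          rw [h1]
          exact hG'O _ (inv_mem (hmem k)) _ (hswapy _ hz)
      rcases eq_or_ne k j with rfl | hkj
      · constructor
        · intro z hz
          have h1 : γ k z = γ' k (Equiv.swap x p z) := by
            simp [hγ'j]
          rw [h1]
          exact hG'O _ (hmem k) _ (hswapx _ hz)
        · intro z hz
          have h1 : (γ k)⁻¹ z = Equiv.swap x p ((γ' k)⁻¹ z) := by
            simp [hγ'j, mul_inv_rev]
          rw [h1]
          exact hswapx _ (hG'O _ (inv_mem (hmem k)) _ hz)
      · have hk : γ' k = γ k := by simp [hγ', hki, hkj]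
        exact ⟨fun z hz => hk ▸ hG'O _ (hmem k) _ hz,
               fun z hz => hk ▸ hG'O _ (inv_mem (hmem k)) _ hz⟩
    · exact ⟨fun z hz => by simpa using hz, fun z hz => by simpa using hz⟩
    · rintro g h _ _ ⟨hg, hg'⟩ ⟨hh, hh'⟩
      exact ⟨fun z hz => by simpa using hg _ (hh _ hz),
             fun z hz => by simpa [mul_inv_rev] using hh' _ (hg' _ hz)⟩
    · rintro g _ ⟨hg, hg'⟩
      exact ⟨hg', by simpa using hg⟩
  have hall : ∀ a : X, a ∈ O := by
    intro a
    rcases eq_or_ne a p with rfl | ha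
    · exact hpO
    · obtain ⟨τ, hτ, hτy⟩ := htrans y a hy ha
      exact hτy ▸ key τ hτ y hyO
  intro a b
  obtain ⟨σa, hσa, hσap⟩ := hall a
  obtain ⟨σb, hσb, hσbp⟩ := hall b
  exact ⟨σb * σa⁻¹, mul_mem hσb (inv_mem hσa), by
    simp [← hσap, ← hσbp]⟩
end

section
/- Let d ≥ 2 and n ≥ 2 be integers such that n(d-1) is even. Then there exist permutations σ_1, …, σ_n of Fin d, each a cycle of length d (σ_i.IsCycle and σ_i.support.card = d), such that σ_n * ⋯ * σ_1 = 1. -/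
open Equiv Equiv.Perm Finset

private lemma prod_ofFn_pow {G : Type*} [Group G] (c : G) :
    ∀ (k : ℕ) (e : ℕ → ℕ),
      (List.ofFn (fun i : Fin k => c ^ e i.val)).reverse.prod
        = c ^ (∑ i ∈ Finset.range k, e i)
  | 0, e => by simp
  | (k+1), e => by
    rw [List.ofFn_succ', Finset.sum_range_succ]
    simp only [List.concat_eq_append, List.reverse_append, List.reverse_cons, List.reverse_nil,
      List.nil_append, List.singleton_append, List.prod_cons, Fin.coe_castSucc, Fin.val_last]
    rw [prod_ofFn_pow c k e, ← pow_add, add_comm]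

private lemma sum_alt_even (d : ℕ) (hd : 1 ≤ d) :
    ∀ m : ℕ, ∑ i ∈ Finset.range (2*m), (if Even i then 1 else d-1) = m * d := by
  intro m
  induction m with
  | zero => simp
  | succ m ih =>
    have h1 : 2 * (m+1) = (2*m) + 1 + 1 := by ring
    rw [h1, Finset.sum_range_succ, Finset.sum_range_succ, ih]
    rw [if_pos ⟨m, by ring⟩, if_neg (Nat.not_even_iff_odd.mpr ⟨m, rfl⟩)]
    have : 1 + (d - 1) = d := by omega
    ring_nf
    omega

private lemma sum_alt_odd (d : ℕ) (hd : 1 ≤ d) :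
    ∀ m : ℕ, 1 ≤ m →
      ∑ i ∈ Finset.range (2*m+1),
        (if i = 0 then 2 else if i ≤ 2 then d-1 else if Even i then 1 else d-1)
      = (m+1) * d := by
  intro m
  induction m with
  | zero => omega
  | succ m ih =>
    intro _
    by_cases hm : 1 ≤ m
    · have h1 : 2 * (m+1) + 1 = (2*m+1) + 1 + 1 := by ring
      rw [h1, Finset.sum_range_succ, Finset.sum_range_succ, ih hm]
      rw [if_neg (by omega), if_neg (by omega),
        if_neg (Nat.not_even_iff_odd.mpr ⟨m, rfl⟩)]
      rw [if_neg (by omega), if_neg (by omega), if_pos ⟨m+1, by ring⟩]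
      have : d - 1 + 1 = d := by omega
      ring_nf
      omega
    · have hm0 : m = 0 := by omega
      subst hm0
      norm_num [Finset.sum_range_succ]
      omega

/-- **Base case II: all ramification orders equal to the degree.** Let `d ≥ 2`, `n ≥ 2`
with `n * (d - 1)` even. Then there exist permutations `σ 0, …, σ (n-1)` of `Fin d`, each
a cycle of length `d`, whose product `σ (n-1) * ⋯ * σ 0` is the identity. -/
theorem full_cycles_with_trivial_product (d n : ℕ) (hd : 2 ≤ d) (hn : 2 ≤ n)
    (heven : Even (n * (d - 1))) :
    ∃ σ : Fin n → Equiv.Perm (Fin d),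
      (∀ i, (σ i).IsCycle ∧ (σ i).support.card = d) ∧
      ((List.ofFn σ).reverse).prod = 1 := by
  set c := finRotate d with hc_def
  have hc : c.IsCycle := isCycle_finRotate_of_le hd
  have hsupp : c.support = Finset.univ := support_finRotate_of_le hd
  have hcard : c.support.card = d := by rw [hsupp, Finset.card_univ, Fintype.card_fin]
  have horder : orderOf c = d := by rw [hc.orderOf, hcard]
  have hcop_pred : Nat.Coprime (d - 1) d := by
    have h1 : d - 1 + 1 = d := by omega
    rw [← h1]
    simp
  have key : ∀ e : ℕ → ℕ, (∀ i < n, Nat.Coprime (e i) d) →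
      (d ∣ ∑ i ∈ Finset.range n, e i) →
      ∃ σ : Fin n → Equiv.Perm (Fin d),
        (∀ i, (σ i).IsCycle ∧ (σ i).support.card = d) ∧
        ((List.ofFn σ).reverse).prod = 1 := by
    intro e hcop hdvd
    refine ⟨fun i => c ^ e i.val, fun i => ?_, ?_⟩
    · have hco := hcop i.val i.isLt
      have hcyc : (c ^ e i.val).IsCycle := hc.pow_iff.mpr (by rwa [horder])
      refine ⟨hcyc, ?_⟩
      have hnd : ¬ orderOf c ∣ e i.val := by
        rw [horder]
        intro hdd
        have h2 := Nat.Coprime.eq_one_of_dvd hco.symm hdd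
        omega
      rw [hc.support_pow_eq_iff.mpr hnd, hcard]
    · rw [prod_ofFn_pow]
      obtain ⟨k, hk⟩ := hdvd
      have hcd : c ^ d = 1 := orderOf_dvd_iff_pow_eq_one.mp (by rw [horder])
      rw [hk, pow_mul, hcd, one_pow]
  rcases Nat.even_or_odd n with he | ho
  · obtain ⟨m, hm⟩ := he
    have hm2 : n = 2 * m := by omega
    refine key (fun i => if Even i then 1 else d - 1) ?_ ?_
    · intro i _
      by_cases h : Even i
      · simp [h, Nat.coprime_one_left]
      · simpa [h] using hcop_pred
    · rw [hm2, sum_alt_even d (by omega)]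
      exact dvd_mul_left d m
  · -- n odd, so d - 1 even, so d odd
    have hdodd : Odd d := by
      rcases Nat.even_mul.mp heven with h | h
      · exact absurd h (Nat.not_even_iff_odd.mpr ho)
      · have : Odd (d - 1 + 1) := Even.add_one h
        rwa [Nat.sub_add_cancel (by omega)] at this
    obtain ⟨m, hm⟩ := ho
    have hm1 : 1 ≤ m := by omega
    refine key (fun i => if i = 0 then 2 else if i ≤ 2 then d-1 else
        if Even i then 1 else d-1) ?_ ?_
    · intro i _
      by_cases h0 : i = 0
      · simp only [h0, if_pos rfl]
        exact Nat.coprime_two_left.mpr hdodd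
      · by_cases h2 : i ≤ 2
        · simpa [h0, h2] using hcop_pred
        · by_cases he : Even i
          · simp [h0, h2, he, Nat.coprime_one_left]
          · simpa [h0, h2, he] using hcop_pred
    · rw [hm, sum_alt_odd d (by omega) m hm1]
      exact dvd_mul_left d (m+1)
end

section
/- Let d ≥ 2 and n be integers with n even and n ≥ 2(d - 1). Then there exist permutations σ_1, …, σ_n of Fin d such that: each σ_i is a transposition (a cycle of length 2); σ_n * ⋯ * σ_1 = 1; the subgroup generated by {σ_1, …, σ_n} acts transitively on Fin d; and for every i ∈ {1, …, n-1} the supports of σ_i and σ_{i+1} have nonempty intersection. -/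
set_option maxHeartbeats 1000000 in


/-- **Base case I: all ramification orders equal to 2.** Let `d ≥ 2` and `n` be even with
`n ≥ 2(d - 1)`. Then there exist transpositions `σ 0, …, σ (n-1)` of `Fin d` (cycles of
length `2`) whose product `σ (n-1) * ⋯ * σ 0` is the identity, generating a transitive
subgroup, and such that consecutive transpositions have intersecting supports. -/
theorem transpositions_with_trivial_product (d n : ℕ) (hd : 2 ≤ d)
    (hn : Even n) (hge : 2 * (d - 1) ≤ n) :
    ∃ σ : Fin n → Equiv.Perm (Fin d),
      (∀ i, (σ i).IsCycle ∧ (σ i).support.card = 2) ∧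
      ((List.ofFn σ).reverse).prod = 1 ∧
      (∀ a b : Fin d, ∃ τ ∈ Subgroup.closure (Set.range σ), τ a = b) ∧
      (∀ i : ℕ, ∀ h : i + 1 < n,
        ((σ ⟨i, Nat.lt_of_succ_lt h⟩).support ∩ (σ ⟨i + 1, h⟩).support).Nonempty) := by
  obtain ⟨m, rfl⟩ := hn
  set k := m - (d - 1) with hk
  -- the "index" of the transposition at step j (each used twice)
  set c : ℕ → ℕ := fun j => min (j - k) (d - 2) with hc
  have hclt : ∀ j, c j + 1 < d := by intro j; simp only [hc]; omega
  set T : ℕ → Equiv.Perm (Fin d) := fun j =>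
    Equiv.swap ⟨c j, by have := hclt j; omega⟩ ⟨c j + 1, hclt j⟩ with hT
  have hne : ∀ j, (⟨c j, by have := hclt j; omega⟩ : Fin d) ≠ ⟨c j + 1, hclt j⟩ := by
    intro j
    simp [Fin.ext_iff]
  have hTT : ∀ j, T j * T j = 1 := fun j => Equiv.swap_mul_self _ _
  refine ⟨fun i => T (i.val / 2), ?_, ?_, ?_, ?_⟩
  · intro i
    exact ⟨Equiv.Perm.isCycle_swap (hne _), Equiv.Perm.card_support_swap (hne _)⟩
  · -- the product is trivial
    have key : ∀ M, Even M →
        (((List.range M).map (fun i => T (i / 2))).reverse).prod = 1 := by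
      intro M hM
      induction M using Nat.strong_induction_on with
      | _ M ih =>
        match M, hM with
        | 0, _ => simp
        | 1, hM => simp at hM
        | (M+2), hM =>
          have h2 : M + 2 = (M + 1) + 1 := rfl
          rw [h2, List.range_succ, List.range_succ, List.map_append, List.map_append,
            List.reverse_append, List.reverse_append]
          simp only [List.map_cons, List.map_nil, List.reverse_cons, List.reverse_nil,
            List.nil_append, List.prod_cons, List.prod_append, List.singleton_append,
            List.prod_cons]
          have hMe : Even M := by rcases hM with ⟨t, ht⟩; exact ⟨t - 1, by omega⟩
          obtain ⟨t, ht⟩ := hMe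
          have hdiv : (M + 1) / 2 = M / 2 := by omega
          rw [hdiv, ← mul_assoc, hTT, one_mul]
          exact ih M (by omega) ⟨t, ht⟩
    rw [List.ofFn_eq_map,
      show (List.map (fun i : Fin (m + m) => T (i.val / 2)) (List.finRange (m + m)))
          = List.map ((fun i => T (i / 2)) ∘ Fin.val) (List.finRange (m + m)) from rfl,
      ← List.map_map, (List.ext_getElem (by simp) (fun _ _ _ => by simp) :
        List.map Fin.val (List.finRange (m + m)) = List.range (m + m))]
    exact key (m + m) ⟨m, rfl⟩
  · -- transitivity
    have hswap_mem : ∀ j (hj : j ≤ d - 2),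
        Equiv.swap (⟨j, by omega⟩ : Fin d) ⟨j + 1, by omega⟩ ∈
          Set.range (fun i : Fin (m + m) => T (i.val / 2)) := by
      intro j hj
      have hi : 2 * (k + j) < m + m := by omega
      refine ⟨⟨2 * (k + j), hi⟩, ?_⟩
      have h1 : 2 * (k + j) / 2 = k + j := by omega
      have h2 : c (k + j) = j := by simp only [hc]; omega
      show T (2 * (k + j) / 2) = _
      rw [h1, hT]
      simp [Fin.ext_iff, h2]
    have reach : ∀ v (hv : v < d),
        ∃ τ ∈ Subgroup.closure (Set.range (fun i : Fin (m + m) => T (i.val / 2))),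
          τ ⟨0, by omega⟩ = ⟨v, hv⟩ := by
      intro v
      induction v with
      | zero => intro hv; exact ⟨1, Subgroup.one_mem _, rfl⟩
      | succ v ih =>
        intro hv
        obtain ⟨τ, hτ, hτ0⟩ := ih (by omega)
        refine ⟨Equiv.swap ⟨v, by omega⟩ ⟨v + 1, hv⟩ * τ,
          Subgroup.mul_mem _ (Subgroup.subset_closure (hswap_mem v (by omega))) hτ, ?_⟩
        show Equiv.swap ⟨v, by omega⟩ ⟨v + 1, hv⟩ (τ ⟨0, by omega⟩) = ⟨v + 1, hv⟩
        rw [hτ0, Equiv.swap_apply_left]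
    intro a b
    obtain ⟨τa, hτa, hτa0⟩ := reach a.val a.isLt
    obtain ⟨τb, hτb, hτb0⟩ := reach b.val b.isLt
    refine ⟨τb * τa⁻¹, Subgroup.mul_mem _ hτb (Subgroup.inv_mem _ hτa), ?_⟩
    have h1 : τa⁻¹ a = (⟨0, by omega⟩ : Fin d) := by
      apply τa.injective
      rw [Equiv.Perm.coe_inv, Equiv.apply_symm_apply, hτa0]
    show τb (τa⁻¹ a) = b
    rw [h1, hτb0]
  · -- adjacency
    intro i h
    have hc2lt := hclt ((i + 1) / 2)
    refine ⟨⟨c ((i + 1) / 2), by omega⟩, Finset.mem_inter.2 ⟨?_, ?_⟩⟩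
    · show _ ∈ (T (i / 2)).support
      rw [hT, Equiv.Perm.support_swap (hne _)]
      have : c ((i + 1) / 2) = c (i / 2) ∨ c ((i + 1) / 2) = c (i / 2) + 1 := by
        simp only [hc]; omega
      rcases this with h' | h' <;> simp [Fin.ext_iff, h']
    · show _ ∈ (T ((i + 1) / 2)).support
      rw [hT, Equiv.Perm.support_swap (hne _)]
      simp
end

section
/- For every integer n ≥ 3, there do not exist permutations σ_1, …, σ_n of Fin 4 such that σ_1, …, σ_{n-1} each have cycle type {2,2}, σ_n is a 3-cycle, and σ_n * σ_{n-1} * ⋯ * σ_1 = 1. Consequently, there is no degree-4 branched cover of ℙ¹ with ramification profiles [2,2] over n−1 branch points and [3,1] over one further branch point, even though these data satisfy the Riemann–Hurwitz formula with g = n − 3. -/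
set_option maxRecDepth 10000 in
lemma klein_closed : ∀ a b : Equiv.Perm (Fin 4), a^2 = 1 → Equiv.Perm.sign a = 1 →
    b^2 = 1 → Equiv.Perm.sign b = 1 → (a*b)^2 = 1 ∧ Equiv.Perm.sign (a*b) = 1 := by decide

lemma klein_prod (L : List (Equiv.Perm (Fin 4)))
    (h : ∀ x ∈ L, x^2 = 1 ∧ Equiv.Perm.sign x = 1) :
    L.prod^2 = 1 ∧ Equiv.Perm.sign L.prod = 1 := by
  induction L with
  | nil => simp
  | cons a t ih =>
    have ha := h a (by simp)
    have ht := ih (fun x hx => h x (by simp [hx]))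
    simpa using klein_closed a t.prod ha.1 ha.2 ht.1 ht.2

/-- **Nonexistence example.** For every `n ≥ 3` there are no permutations
`σ 0, …, σ (n-1)` of `Fin 4` such that `σ 0, …, σ (n-2)` each have cycle type `{2,2}`,
`σ (n-1)` is a 3-cycle (cycle type `{3}`), and `σ (n-1) * ⋯ * σ 0 = 1`. (Hence, by the
Riemann Existence Theorem, there is no degree-4 branched cover of `ℙ¹` with ramification
profiles `[2,2]` over `n-1` branch points and `[3,1]` over one further branch point,
even though these data satisfy the Riemann–Hurwitz formula with `g = n - 3`.) -/
theorem no_cover_with_double_transpositions_and_three_cycle (n : ℕ) (hn : 3 ≤ n) :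
    ¬ ∃ σ : Fin n → Equiv.Perm (Fin 4),
      (∀ i : Fin n, (i : ℕ) + 1 < n → (σ i).cycleType = {2, 2}) ∧
      (σ ⟨n - 1, Nat.sub_lt (by omega) one_pos⟩).cycleType = {3} ∧
      ((List.ofFn σ).reverse).prod = 1 := by
  obtain ⟨m, rfl⟩ : ∃ m, n = m + 1 := ⟨n - 1, by omega⟩
  rintro ⟨σ, h22, h3, hprod⟩
  have h3' : (σ (Fin.last m)).cycleType = {3} := by
    exact h3
  -- split off last element
  rw [List.ofFn_succ', List.concat_eq_append, List.reverse_append] at hprod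
  simp only [List.reverse_singleton, List.singleton_append, List.prod_cons] at hprod
  set τ := σ (Fin.last m)
  set q := (List.ofFn fun i : Fin m => σ i.castSucc).reverse.prod with hq
  have hmem : ∀ x ∈ (List.ofFn fun i : Fin m => σ i.castSucc).reverse,
      x^2 = 1 ∧ Equiv.Perm.sign x = 1 := by
    intro x hx
    rw [List.mem_reverse, List.mem_ofFn] at hx
    obtain ⟨i, rfl⟩ := hx
    have hc : (σ i.castSucc).cycleType = {2, 2} := h22 i.castSucc (by simp)
    constructor
    · have ho : orderOf (σ i.castSucc) = 2 := by
        rw [← Equiv.Perm.lcm_cycleType, hc]; decide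
      rw [← ho]; exact pow_orderOf_eq_one _
    · rw [Equiv.Perm.sign_of_cycleType, hc]; decide
  have hqk := klein_prod _ hmem
  have hτ2 : τ^2 = 1 := by
    have : τ = q⁻¹ := by
      rw [eq_inv_iff_mul_eq_one]; exact hprod
    rw [this, inv_pow, hq, hqk.1, inv_one]
  have ho3 : orderOf τ = 3 := by
    rw [← Equiv.Perm.lcm_cycleType, h3']; decide
  have : orderOf τ ∣ 2 := orderOf_dvd_of_pow_eq_one hτ2
  rw [ho3] at this
  omega
end
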